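/- arXiv:2605.17887 — 4 statements merged into one kernel-verified Lean document; each statement's English description precedes it below -/
import Mathlib

section
/- Let d and m be natural numbers with m ≥ 1, let v₁, …, vₘ be vectors in ℝᵈ, and let p₁, …, pₘ be nonnegative reals with ∑_{j=1}^m p_j = 1. Suppose there exist constants c₀, c₁ with 0 ≤ c₀ < c₁, an index o ∈ {1,…,m}, and a unit vector u ∈ ℝᵈ such that ‖v_o‖ ≤ c₀ and ⟨v_j, u⟩ ≥ c₁ for all j ≠ o. If δ is a real number with δ < c₁ and ‖∑_{j=1}^m p_j v_j‖ ≤ δ, then p_o ≥ (c₁ − δ)/(c₀ + c₁). -/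
/-- Lemma 1 (No-op outliers are structurally induced). -/
theorem noop_outlier_lower_bound
    (d m : ℕ) (hm : 1 ≤ m)
    (v : Fin m → EuclideanSpace ℝ (Fin d))
    (p : Fin m → ℝ) (hp : ∀ j, 0 ≤ p j) (hpsum : ∑ j, p j = 1)
    (c₀ c₁ : ℝ) (hc₀ : 0 ≤ c₀) (hc₀c₁ : c₀ < c₁)
    (o : Fin m) (u : EuclideanSpace ℝ (Fin d)) (hu : ‖u‖ = 1)
    (hvo : ‖v o‖ ≤ c₀)
    (halign : ∀ j, j ≠ o → c₁ ≤ (inner ℝ (v j) u : ℝ))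
    (δ : ℝ) (hδ : δ < c₁)
    (hA : ‖∑ j, p j • v j‖ ≤ δ) :
    (c₁ - δ) / (c₀ + c₁) ≤ p o := by
  set A := ∑ j, p j • v j with hAdef
  have hpo1 : p o ≤ 1 := by
    rw [← hpsum]
    exact Finset.single_le_sum (fun j _ => hp j) (Finset.mem_univ o)
  have hinnerA : (inner ℝ A u : ℝ) ≤ δ := by
    calc (inner ℝ A u : ℝ) ≤ ‖A‖ * ‖u‖ := real_inner_le_norm A u
    _ = ‖A‖ := by rw [hu, mul_one]
    _ ≤ δ := hA
  have hexp : (inner ℝ A u : ℝ) = ∑ j, p j * (inner ℝ (v j) u : ℝ) := by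
    rw [hAdef, sum_inner]
    simp [real_inner_smul_left, Finset.mul_sum, mul_assoc]
  have hvoinner : -c₀ ≤ (inner ℝ (v o) u : ℝ) := by
    have := abs_real_inner_le_norm (v o) u
    rw [hu, mul_one] at this
    nlinarith [abs_le.mp this]
  have hlow : c₁ - p o * (c₀ + c₁) ≤ (inner ℝ A u : ℝ) := by
    rw [hexp, ← Finset.sum_erase_add _ _ (Finset.mem_univ o)]
    have h1 : ∑ j ∈ Finset.univ.erase o, p j * c₁
        ≤ ∑ j ∈ Finset.univ.erase o, p j * (inner ℝ (v j) u : ℝ) :=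
      Finset.sum_le_sum fun j hj =>
        mul_le_mul_of_nonneg_left (halign j (Finset.ne_of_mem_erase hj)) (hp j)
    have hsum' : ∑ j ∈ Finset.univ.erase o, p j = 1 - p o := by
      have := Finset.sum_erase_add Finset.univ p (Finset.mem_univ o)
      linarith [this.symm ▸ hpsum]
    have h2 : p o * (-c₀) ≤ p o * (inner ℝ (v o) u : ℝ) :=
      mul_le_mul_of_nonneg_left hvoinner (hp o)
    have h3 : ∑ j ∈ Finset.univ.erase o, p j * c₁ = (1 - p o) * c₁ := by
      rw [← Finset.sum_mul, hsum']
    nlinarith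
  have hkey : c₁ - δ ≤ p o * (c₀ + c₁) := by linarith
  rw [div_le_iff₀ (by linarith)]
  linarith
end

section
/- Let d and ℓ be natural numbers with ℓ ≥ 1, let u₀, …, u_{ℓ−1} be vectors in ℝᵈ, and let α₀, …, α_{ℓ−1} be nonnegative reals with ∑_{i=0}^{ℓ−1} α_i = 1. Suppose there exist an index i* ∈ {0,…,ℓ−1}, constants b₀ ≥ 0 and b₁ > 0, and a unit vector w ∈ ℝᵈ such that ‖u_{i*}‖ ≤ b₀ and ⟨u_i, w⟩ ≥ b₁ for all i ≠ i*. If δ is a real number and ‖∑_{i=0}^{ℓ−1} α_i u_i‖ ≤ δ, then α_{i*} ≥ (b₁ − δ)/(b₀ + b₁). -/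
/-- Quantitative core of Theorem 2 (conditional depth collapse). -/
theorem depth_weight_concentration
    (d ℓ : ℕ) (hℓ : 1 ≤ ℓ)
    (u : Fin ℓ → EuclideanSpace ℝ (Fin d))
    (α : Fin ℓ → ℝ) (hα : ∀ i, 0 ≤ α i) (hαsum : ∑ i, α i = 1)
    (istar : Fin ℓ)
    (b₀ b₁ : ℝ) (hb₀ : 0 ≤ b₀) (hb₁ : 0 < b₁)
    (w : EuclideanSpace ℝ (Fin d)) (hw : ‖w‖ = 1)
    (hustar : ‖u istar‖ ≤ b₀)
    (halign : ∀ i, i ≠ istar → b₁ ≤ (inner ℝ (u i) w : ℝ))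
    (δ : ℝ) (hA : ‖∑ i, α i • u i‖ ≤ δ) :
    (b₁ - δ) / (b₀ + b₁) ≤ α istar := by
  set S : ℝ := inner ℝ (∑ i, α i • u i) w with hS
  have hSle : S ≤ δ := by
    calc S ≤ ‖∑ i, α i • u i‖ * ‖w‖ := real_inner_le_norm _ _
    _ ≤ δ := by rw [hw, mul_one]; exact hA
  have hSsum : S = ∑ i, α i * inner ℝ (u i) w := by
    rw [hS, sum_inner]
    exact Finset.sum_congr rfl fun i _ => real_inner_smul_left _ _ _
  have hstar : -b₀ ≤ (inner ℝ (u istar) w : ℝ) := by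
    have := abs_real_inner_le_norm (u istar) w
    rw [hw, mul_one] at this
    linarith [(abs_le.mp (this.trans hustar)).1]
  have hsum' : ∑ i ∈ Finset.univ.erase istar, α i = 1 - α istar := by
    have := Finset.add_sum_erase Finset.univ α (Finset.mem_univ istar)
    rw [hαsum] at this; linarith
  have hlow : (1 - α istar) * b₁ - α istar * b₀ ≤ S := by
    have h1 : ∑ i ∈ Finset.univ.erase istar, α i * b₁ ≤
        ∑ i ∈ Finset.univ.erase istar, α i * inner ℝ (u i) w :=
      Finset.sum_le_sum fun i hi =>
        mul_le_mul_of_nonneg_left (halign i (Finset.ne_of_mem_erase hi)) (hα i)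
    have h2 : α istar * (-b₀) ≤ α istar * inner ℝ (u istar) w :=
      mul_le_mul_of_nonneg_left hstar (hα istar)
    have h3 : S = α istar * inner ℝ (u istar) w +
        ∑ i ∈ Finset.univ.erase istar, α i * inner ℝ (u i) w := by
      rw [hSsum, ← Finset.add_sum_erase Finset.univ (fun i => α i * inner ℝ (u i) w) (Finset.mem_univ istar)]
    rw [← Finset.sum_mul, hsum'] at h1
    linarith
  have hpos : 0 < b₀ + b₁ := by linarith
  rw [div_le_iff₀ hpos]
  nlinarith [hα istar]
end

section
/- Let d and ℓ be natural numbers with ℓ ≥ 1, let u₀, …, u_{ℓ−1} be vectors in ℝᵈ, and let α₀, …, α_{ℓ−1} be nonnegative reals with ∑_{i=0}^{ℓ−1} α_i = 1. Suppose there exist an index i* ∈ {0,…,ℓ−1}, constants b₀ ≥ 0 and b₁ > 0, and a unit vector w ∈ ℝᵈ such that ‖u_{i*}‖ ≤ b₀ and ⟨u_i, w⟩ ≥ b₁ for all i ≠ i*. If δ is a real number and ‖∑_{i=0}^{ℓ−1} α_i u_i‖ ≤ δ, then ∑_{i ≠ i*} α_i ≤ (b₀ + δ)/(b₀ + b₁).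 -/
/-- Complementary form of the depth-weight concentration bound in Theorem 2. -/
theorem off_branch_mass_upper_bound
    (d ℓ : ℕ) (hℓ : 1 ≤ ℓ)
    (u : Fin ℓ → EuclideanSpace ℝ (Fin d))
    (α : Fin ℓ → ℝ) (hα : ∀ i, 0 ≤ α i) (hαsum : ∑ i, α i = 1)
    (istar : Fin ℓ)
    (b₀ b₁ : ℝ) (hb₀ : 0 ≤ b₀) (hb₁ : 0 < b₁)
    (w : EuclideanSpace ℝ (Fin d)) (hw : ‖w‖ = 1)
    (hustar : ‖u istar‖ ≤ b₀)
    (halign : ∀ i, i ≠ istar → b₁ ≤ (inner ℝ (u i) w : ℝ))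
    (δ : ℝ) (hA : ‖∑ i, α i • u i‖ ≤ δ) :
    ∑ i ∈ Finset.univ.erase istar, α i ≤ (b₀ + δ) / (b₀ + b₁) := by
  set S := ∑ i ∈ Finset.univ.erase istar, α i with hS
  have hsplit : α istar + S = 1 := by
    rw [hS, Finset.add_sum_erase _ _ (Finset.mem_univ istar)] at *
    exact hαsum
  -- inner product bound
  have hinner : (inner ℝ (∑ i, α i • u i) w : ℝ) ≤ δ := by
    calc (inner ℝ (∑ i, α i • u i) w : ℝ) ≤ ‖∑ i, α i • u i‖ * ‖w‖ :=
          real_inner_le_norm _ _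
      _ = ‖∑ i, α i • u i‖ := by rw [hw, mul_one]
      _ ≤ δ := hA
  have hexp : (inner ℝ (∑ i, α i • u i) w : ℝ)
      = ∑ i, α i * (inner ℝ (u i) w : ℝ) := by
    rw [sum_inner]
    exact Finset.sum_congr rfl fun i _ => real_inner_smul_left _ _ _
  have hstar : -b₀ ≤ (inner ℝ (u istar) w : ℝ) := by
    have := real_inner_le_norm (u istar) w
    have h2 := abs_real_inner_le_norm (u istar) w
    rw [hw, mul_one] at h2
    linarith [neg_abs_le (inner ℝ (u istar) w : ℝ), hustar]
  have hlow : α istar * (-b₀) + S * b₁ ≤ ∑ i, α i * (inner ℝ (u i) w : ℝ) := by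
    rw [← Finset.add_sum_erase _ _ (Finset.mem_univ istar), hS,
      Finset.sum_mul]
    have h1 : α istar * (-b₀) ≤ α istar * (inner ℝ (u istar) w : ℝ) :=
      mul_le_mul_of_nonneg_left hstar (hα istar)
    have h2 : ∑ i ∈ Finset.univ.erase istar, α i * b₁
        ≤ ∑ i ∈ Finset.univ.erase istar, α i * (inner ℝ (u i) w : ℝ) := by
      apply Finset.sum_le_sum
      intro i hi
      exact mul_le_mul_of_nonneg_left (halign i (Finset.ne_of_mem_erase hi)) (hα i)
    linarith
  have key : α istar * (-b₀) + S * b₁ ≤ δ := by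
    rw [hexp] at hinner; linarith
  have hαle : α istar ≤ 1 := by
    have : 0 ≤ S := Finset.sum_nonneg fun i _ => hα i
    linarith
  have hb01 : 0 < b₀ + b₁ := by linarith
  rw [le_div_iff₀ hb01]
  nlinarith [hα istar]
end

section
/- Let d be a natural number and ℓ ≥ 1, and for each n ∈ ℕ let u₀ⁿ, …, u_{ℓ−1}ⁿ be vectors in ℝᵈ and α₀ⁿ, …, α_{ℓ−1}ⁿ nonnegative reals with ∑_i α_iⁿ = 1. Fix b₁ > 0 and an index i*, and suppose for each n there is a unit vector wₙ ∈ ℝᵈ with ⟨u_iⁿ, wₙ⟩ ≥ b₁ for all i ≠ i*, that ‖u_{i*}ⁿ‖ ≤ b₀ⁿ with b₀ⁿ → 0, and that ‖∑_i α_iⁿ u_iⁿ‖ ≤ δₙ with δₙ → 0. Then α_{i*}ⁿ → 1 and ∑_{i≠i*} α_iⁿ → 0 as n → ∞. -/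
open Filter

/-- Limiting (high-separation) form of Theorem 2 (conditional depth collapse
toward vanilla-like residual). -/
theorem depth_collapse_limit
    (d ℓ : ℕ) (hℓ : 1 ≤ ℓ)
    (u : ℕ → Fin ℓ → EuclideanSpace ℝ (Fin d))
    (α : ℕ → Fin ℓ → ℝ)
    (hα : ∀ n i, 0 ≤ α n i) (hαsum : ∀ n, ∑ i, α n i = 1)
    (b₁ : ℝ) (hb₁ : 0 < b₁) (istar : Fin ℓ)
    (w : ℕ → EuclideanSpace ℝ (Fin d)) (hw : ∀ n, ‖w n‖ = 1)
    (halign : ∀ n, ∀ i, i ≠ istar → b₁ ≤ (inner ℝ (u n i) (w n) : ℝ))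
    (b₀ : ℕ → ℝ) (hustar : ∀ n, ‖u n istar‖ ≤ b₀ n)
    (hb₀ : Tendsto b₀ atTop (nhds 0))
    (δ : ℕ → ℝ) (hA : ∀ n, ‖∑ i, α n i • u n i‖ ≤ δ n)
    (hδ : Tendsto δ atTop (nhds 0)) :
    Tendsto (fun n => α n istar) atTop (nhds 1) ∧
      Tendsto (fun n => ∑ i ∈ Finset.univ.erase istar, α n i) atTop (nhds 0) := by
  set S : ℕ → ℝ := fun n => ∑ i ∈ Finset.univ.erase istar, α n i with hS
  have hS0 : ∀ n, 0 ≤ S n := fun n =>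
    Finset.sum_nonneg (fun i _ => hα n i)
  have hαle1 : ∀ n, α n istar ≤ 1 := by
    intro n
    rw [← hαsum n]
    exact Finset.single_le_sum (fun i _ => hα n i) (Finset.mem_univ _)
  have hb₀0 : ∀ n, 0 ≤ b₀ n := fun n => le_trans (norm_nonneg _) (hustar n)
  have key : ∀ n, b₁ * S n ≤ δ n + b₀ n := by
    intro n
    have h1 : (inner ℝ (∑ i, α n i • u n i) (w n) : ℝ) ≤ δ n := by
      calc (inner ℝ (∑ i, α n i • u n i) (w n) : ℝ)
          ≤ ‖∑ i, α n i • u n i‖ * ‖w n‖ := real_inner_le_norm _ _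
        _ = ‖∑ i, α n i • u n i‖ := by rw [hw n, mul_one]
        _ ≤ δ n := hA n
    have h2 : (inner ℝ (∑ i, α n i • u n i) (w n) : ℝ)
        = ∑ i, α n i * (inner ℝ (u n i) (w n) : ℝ) := by
      rw [sum_inner]
      exact Finset.sum_congr rfl fun i _ => real_inner_smul_left _ _ _
    have hsplit : ∑ i, α n i * (inner ℝ (u n i) (w n) : ℝ)
        = α n istar * (inner ℝ (u n istar) (w n) : ℝ)
          + ∑ i ∈ Finset.univ.erase istar, α n i * (inner ℝ (u n i) (w n) : ℝ) :=
      (Finset.add_sum_erase _ _ (Finset.mem_univ istar)).symm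
    have hstar : -(b₀ n) ≤ α n istar * (inner ℝ (u n istar) (w n) : ℝ) := by
      have habs : |(inner ℝ (u n istar) (w n) : ℝ)| ≤ b₀ n := by
        calc |(inner ℝ (u n istar) (w n) : ℝ)| ≤ ‖u n istar‖ * ‖w n‖ :=
              abs_real_inner_le_norm _ _
          _ = ‖u n istar‖ := by rw [hw n, mul_one]
          _ ≤ b₀ n := hustar n
      have h3 : -(b₀ n) ≤ (inner ℝ (u n istar) (w n) : ℝ) := neg_le_of_abs_le habs
      calc -(b₀ n) = α n istar * (-(b₀ n)) + (1 - α n istar) * (-(b₀ n)) := by ring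
        _ ≤ α n istar * (inner ℝ (u n istar) (w n) : ℝ) + 0 := by
            have := mul_le_mul_of_nonneg_left h3 (hα n istar)
            have h4 : (1 - α n istar) * (-(b₀ n)) ≤ 0 :=
              mul_nonpos_of_nonneg_of_nonpos (by linarith [hαle1 n]) (by linarith [hb₀0 n])
            linarith
        _ = _ := add_zero _
    have hrest : b₁ * S n ≤ ∑ i ∈ Finset.univ.erase istar, α n i * (inner ℝ (u n i) (w n) : ℝ) := by
      rw [hS, Finset.mul_sum]
      refine Finset.sum_le_sum fun i hi => ?_
      have hi' : i ≠ istar := Finset.ne_of_mem_erase hi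
      rw [mul_comm b₁]
      exact mul_le_mul_of_nonneg_left (halign n i hi') (hα n i)
    have := h2 ▸ h1
    rw [hsplit] at this
    linarith
  have hSle : ∀ n, S n ≤ (δ n + b₀ n) / b₁ := fun n =>
    (le_div_iff₀' hb₁).mpr (key n)
  have hbound : Tendsto (fun n => (δ n + b₀ n) / b₁) atTop (nhds 0) := by
    have := (hδ.add hb₀).div_const b₁
    simpa using this
  have hStend : Tendsto S atTop (nhds 0) := by
    refine tendsto_of_tendsto_of_tendsto_of_le_of_le tendsto_const_nhds hbound hS0 hSle
  refine ⟨?_, hStend⟩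
  have heq : ∀ n, α n istar = 1 - S n := by
    intro n
    have := Finset.add_sum_erase Finset.univ (α n) (Finset.mem_univ istar)
    rw [hαsum n] at this
    rw [hS]; linarith
  simp only [heq]
  simpa using tendsto_const_nhds.sub hStend
end
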